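/- Let n = 2m be even and let q be an integer with 1 ≤ q ≤ m. Suppose x ∈ {0,1}^n is bad, i.e., T(x,q) = ∅ and T(x̄,q) = ∅. Let x' = x₁…x_{n−2q} be the prefix of x of length n − 2q. Then either T(x'0^{2q}, q) ≠ ∅ or T(x'1^{2q}, q) ≠ ∅, where x'0^{2q} (resp. x'1^{2q}) denotes x' followed by 2q zeros (resp. 2q ones). -/

import Mathlib

/-- The Hamming weight of a binary word `x ∈ {0,1}^N`: the number of ones. -/
def wt {N : ℕ} (x : Fin N → Bool) : ℕ :=
  (Finset.univ.filter (fun i => x i = true)).card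

/-- `Flip x j` complements the first `j` bits of `x`. -/
def Flip {N : ℕ} (x : Fin N → Bool) (j : ℕ) : Fin N → Bool :=
  fun i => if (i : ℕ) < j then !(x i) else x i


lemma cnt_split {N : ℕ} (p q : Fin N → Prop) [DecidablePred p] [DecidablePred q] :
    (Finset.univ.filter p).card
      = (Finset.univ.filter fun i => p i ∧ q i).card
      + (Finset.univ.filter fun i => p i ∧ ¬ q i).card := by
  rw [← Finset.filter_filter, ← Finset.filter_filter,
      Finset.card_filter_add_card_filter_not]

lemma card_lt {N k : ℕ} (hk : k ≤ N) :
    (Finset.univ.filter fun i : Fin N => (i:ℕ) < k).card = k := by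
  induction k with
  | zero => simp
  | succ k ih =>
    have hk' := Nat.le_of_succ_le hk
    have h : (Finset.univ.filter fun i : Fin N => (i:ℕ) < k+1)
        = insert ⟨k, hk⟩ (Finset.univ.filter fun i : Fin N => (i:ℕ) < k) := by
      ext i
      simp only [Finset.mem_filter, Finset.mem_univ, true_and, Finset.mem_insert, Fin.ext_iff]
      omega
    rw [h, Finset.card_insert_of_notMem (by simp), ih hk']

lemma wt_step {N : ℕ} (x : Fin N → Bool) (j : ℕ) (hj : j < N) :
    (x ⟨j, hj⟩ = true ∧ wt (Flip x j) = wt (Flip x (j+1)) + 1) ∨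
    (x ⟨j, hj⟩ = false ∧ wt (Flip x (j+1)) = wt (Flip x j) + 1) := by
  set i0 : Fin N := ⟨j, hj⟩ with hi0
  have hagree : ∀ i : Fin N, i ≠ i0 → Flip x (j+1) i = Flip x j i := by
    intro i hi
    have : (i:ℕ) ≠ j := fun h => hi (Fin.ext h)
    simp only [Flip]
    have : ((i:ℕ) < j+1) ↔ ((i:ℕ) < j) := by omega
    rw [if_congr this rfl rfl]
  have h0 : Flip x j i0 = x i0 := by simp [Flip, hi0]
  have h1 : Flip x (j+1) i0 = !(x i0) := by simp [Flip, hi0]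
  cases hx : x i0 with
  | true =>
    left
    refine ⟨rfl, ?_⟩
    have hset : (Finset.univ.filter fun i => Flip x j i = true)
        = insert i0 (Finset.univ.filter fun i => Flip x (j+1) i = true) := by
      ext i
      by_cases hi : i = i0
      · subst hi; simp [h0, hx]
      · simp [hi, hagree i hi]
    have hnm : i0 ∉ (Finset.univ.filter fun i => Flip x (j+1) i = true) := by
      simp [h1, hx]
    unfold wt
    rw [hset, Finset.card_insert_of_notMem hnm]
  | false =>
    right
    refine ⟨rfl, ?_⟩
    have hset : (Finset.univ.filter fun i => Flip x (j+1) i = true)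
        = insert i0 (Finset.univ.filter fun i => Flip x j i = true) := by
      ext i
      by_cases hi : i = i0
      · subst hi; simp [h1, hx]
      · simp [hi, hagree i hi]
    have hnm : i0 ∉ (Finset.univ.filter fun i => Flip x j i = true) := by
      simp [h0, hx]
    unfold wt
    rw [hset, Finset.card_insert_of_notMem hnm]

lemma walk_ivt (f : ℕ → ℕ) (a b c : ℕ) (hab : a ≤ b)
    (hstep : ∀ j, a ≤ j → j < b → f (j+1) = f j + 1 ∨ f j = f (j+1) + 1)
    (h1 : f a ≤ c) (h2 : c ≤ f b) : ∃ j, a ≤ j ∧ j ≤ b ∧ f j = c := by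
  induction b, hab using Nat.le_induction with
  | base => exact ⟨a, le_rfl, le_rfl, le_antisymm h1 h2⟩
  | succ b hab ih =>
    rcases Nat.lt_or_ge c (f (b+1)) with h | h
    · have hb : c ≤ f b := by
        rcases hstep b hab (Nat.lt_succ_self b) with h' | h' <;> omega
      obtain ⟨j, hj1, hj2, hj3⟩ := ih (fun j hj1 hj2 => hstep j hj1 (by omega)) hb
      exact ⟨j, hj1, by omega, hj3⟩
    · exact ⟨b+1, by omega, le_rfl, le_antisymm h h2⟩

lemma walk_ivt' (f : ℕ → ℕ) (a b c : ℕ) (hab : a ≤ b)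
    (hstep : ∀ j, a ≤ j → j < b → f (j+1) = f j + 1 ∨ f j = f (j+1) + 1)
    (h1 : f b ≤ c) (h2 : c ≤ f a) : ∃ j, a ≤ j ∧ j ≤ b ∧ f j = c := by
  induction b, hab using Nat.le_induction with
  | base => exact ⟨a, le_rfl, le_rfl, le_antisymm h1 h2⟩
  | succ b hab ih =>
    rcases Nat.lt_or_ge (f (b+1)) c with h | h
    · have hb : f b ≤ c := by
        rcases hstep b hab (Nat.lt_succ_self b) with h' | h' <;> omega
      obtain ⟨j, hj1, hj2, hj3⟩ := ih (fun j hj1 hj2 => hstep j hj1 (by omega)) hb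
      exact ⟨j, hj1, by omega, hj3⟩
    · exact ⟨b+1, by omega, le_rfl, le_antisymm h1 h⟩

/-- if `x ∈ {0,1}^n` is bad (`T(x,q) = ∅` and `T(x̄,q) = ∅`), then,
with `x'` the prefix of `x` of length `n − 2q`, either `T(x'0^{2q}, q) ≠ ∅`
or `T(x'1^{2q}, q) ≠ ∅`. -/
theorem stmt1 (m q : ℕ) (hq1 : 1 ≤ q) (hqm : q ≤ m) (x : Fin (2*m) → Bool)
    (hbad1 : ∀ j ≤ 2*m, wt (Flip x j) ≠ m + q)
    (hbad2 : ∀ j ≤ 2*m, wt (Flip (fun i => !(x i)) j) ≠ m + q) :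
    (∃ j ≤ 2*m,
      wt (Flip (fun i : Fin (2*m) => if (i : ℕ) < 2*m - 2*q then x i else false) j) = m + q) ∨
    (∃ j ≤ 2*m,
      wt (Flip (fun i : Fin (2*m) => if (i : ℕ) < 2*m - 2*q then x i else true) j) = m + q) := by
  set k := 2*m - 2*q with hk
  have hkn : k ≤ 2*m := Nat.sub_le _ _
  have hk2q : k + 2*q = 2*m := by omega
  set y : Fin (2*m) → Bool := fun i => if (i:ℕ) < k then x i else false with hy
  set z : Fin (2*m) → Bool := fun i => if (i:ℕ) < k then x i else true with hz
  set P := (Finset.univ.filter fun i : Fin (2*m) => x i = true ∧ (i:ℕ) < k).card with hP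
  set s := (Finset.univ.filter fun i : Fin (2*m) => x i = true ∧ ¬ (i:ℕ) < k).card with hs
  -- prefix parts agree for words agreeing below k
  have pre_eq : ∀ (u v : Fin (2*m) → Bool) (j : ℕ),
      (∀ i : Fin (2*m), (i:ℕ) < k → u i = v i) →
      (Finset.univ.filter fun i => Flip u j i = true ∧ (i:ℕ) < k).card
        = (Finset.univ.filter fun i => Flip v j i = true ∧ (i:ℕ) < k).card := by
    intro u v j huv
    congr 1
    ext i
    by_cases hik : (i:ℕ) < k
    · simp [Flip, hik, huv i hik]
    · simp [hik]
  have hyx : ∀ i : Fin (2*m), (i:ℕ) < k → y i = x i := by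
    intro i hik; simp [hy, hik]
  have hzx : ∀ i : Fin (2*m), (i:ℕ) < k → z i = x i := by
    intro i hik; simp [hz, hik]
  -- suffix parts
  have suf_x : ∀ j ≤ k,
      (Finset.univ.filter fun i : Fin (2*m) => Flip x j i = true ∧ ¬ (i:ℕ) < k).card = s := by
    intro j hj
    congr 1
    ext i
    by_cases hik : (i:ℕ) < k
    · simp [hik]
    · have : ¬ (i:ℕ) < j := by omega
      simp [Flip, this, hik]
  have suf_y : ∀ j ≤ k,
      (Finset.univ.filter fun i : Fin (2*m) => Flip y j i = true ∧ ¬ (i:ℕ) < k).card = 0 := by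
    intro j hj
    rw [Finset.card_eq_zero, Finset.filter_eq_empty_iff]
    intro i _
    by_cases hik : (i:ℕ) < k
    · simp [hik]
    · have : ¬ (i:ℕ) < j := by omega
      simp [Flip, this, hy, hik]
  have suf_z : ∀ j ≤ k,
      (Finset.univ.filter fun i : Fin (2*m) => Flip z j i = true ∧ ¬ (i:ℕ) < k).card = 2*q := by
    intro j hj
    have hset : (Finset.univ.filter fun i : Fin (2*m) => Flip z j i = true ∧ ¬ (i:ℕ) < k)
        = (Finset.univ.filter fun i : Fin (2*m) => ¬ (i:ℕ) < k) := by
      ext i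
      by_cases hik : (i:ℕ) < k
      · simp [hik]
      · have : ¬ (i:ℕ) < j := by omega
        simp [Flip, this, hz, hik]
        tauto
    rw [hset]
    have h1 := Finset.card_filter_add_card_filter_not
      (s := (Finset.univ : Finset (Fin (2*m)))) (p := fun i : Fin (2*m) => (i:ℕ) < k)
    have h2 : (Finset.univ.filter fun i : Fin (2*m) => (i:ℕ) < k).card = k := card_lt hkn
    have h3 : (Finset.univ : Finset (Fin (2*m))).card = 2*m := by simp
    omega
  -- key identities for j ≤ k
  have key_x : ∀ j ≤ k, wt (Flip x j)
      = (Finset.univ.filter fun i : Fin (2*m) => Flip x j i = true ∧ (i:ℕ) < k).card + s := by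
    intro j hj
    rw [← suf_x j hj]
    exact cnt_split _ _
  have key_y : ∀ j ≤ k, wt (Flip y j) + s = wt (Flip x j) := by
    intro j hj
    rw [key_x j hj, ← pre_eq y x j hyx]
    have := cnt_split (fun i : Fin (2*m) => Flip y j i = true) (fun i => (i:ℕ) < k)
    rw [suf_y j hj] at this
    unfold wt
    omega
  have key_z : ∀ j ≤ k, wt (Flip z j) + s = wt (Flip x j) + 2*q := by
    intro j hj
    rw [key_x j hj, ← pre_eq z x j hzx]
    have := cnt_split (fun i : Fin (2*m) => Flip z j i = true) (fun i => (i:ℕ) < k)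
    rw [suf_z j hj] at this
    unfold wt
    omega
  -- value at 0
  have hflip0 : wt (Flip x 0) = P + s := by
    have h0 : Flip x 0 = x := by funext i; simp [Flip]
    rw [h0, hP, hs, wt]
    exact cnt_split _ _
  -- value at k
  have hfk : wt (Flip x k) + P = k + s := by
    have h1 := key_x k le_rfl
    have h2 := cnt_split (fun i : Fin (2*m) => (i:ℕ) < k) (fun i : Fin (2*m) => x i = true)
    rw [card_lt hkn] at h2
    have e1 : (Finset.univ.filter fun i : Fin (2*m) => (i:ℕ) < k ∧ x i = true).card = P := by
      rw [hP]; congr 1; ext i; simp [and_comm]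
    have e2 : (Finset.univ.filter fun i : Fin (2*m) => (i:ℕ) < k ∧ ¬ x i = true).card
        = (Finset.univ.filter fun i : Fin (2*m) => Flip x k i = true ∧ (i:ℕ) < k).card := by
      congr 1; ext i
      by_cases hik : (i:ℕ) < k
      · simp [Flip, hik]
      · simp [hik]
    omega
  -- sum of endpoints
  have hflipall : Flip x (2*m) = fun i => !(x i) := by
    funext i; simp [Flip, i.isLt]
  have hsum : wt (Flip x 0) + wt (Flip x (2*m)) = 2*m := by
    have h0 : Flip x 0 = x := by funext i; simp [Flip]
    rw [h0, hflipall]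
    have e : (Finset.univ.filter fun i : Fin (2*m) => (!(x i)) = true)
        = (Finset.univ.filter fun i : Fin (2*m) => ¬ (x i = true)) := by
      ext i; simp
    unfold wt
    rw [e, Finset.card_filter_add_card_filter_not]
    simp
  -- steps for f
  have hstepf : ∀ j, j < 2*m →
      wt (Flip x (j+1)) = wt (Flip x j) + 1 ∨ wt (Flip x j) = wt (Flip x (j+1)) + 1 := by
    intro j hj
    rcases wt_step x j hj with ⟨_, h⟩ | ⟨_, h⟩
    · right; exact h
    · left; exact h
  -- tail of g increases
  have hgt : ∀ t, t ≤ 2*q → wt (Flip y (k+t)) = wt (Flip y k) + t := by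
    intro t
    induction t with
    | zero => simp
    | succ t ih =>
      intro ht
      have hlt : k + t < 2*m := by omega
      have hbit : y ⟨k+t, hlt⟩ = false := by
        simp only [hy]
        have : ¬ ((k+t : ℕ) < k) := by omega
        simp [this]
      rcases wt_step y (k+t) hlt with ⟨htr, _⟩ | ⟨_, h⟩
      · rw [hbit] at htr; exact absurd htr (by simp)
      · have : k + t + 1 = k + (t+1) := by omega
        rw [this] at h
        rw [h, ih (by omega)]
        omega
  by_cases hcase : m - q + s ≤ wt (Flip x k)
  · -- tail crossing for y
    have hGF := key_y k le_rfl
    have hFub : wt (Flip x k) ≤ m + q := by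
      by_contra hFgt
      push_neg at hFgt
      rcases le_or_gt (wt (Flip x 0)) (m+q) with h0 | h0
      · obtain ⟨j, _, hj2, hj3⟩ := walk_ivt (fun j => wt (Flip x j)) 0 k (m+q)
          (Nat.zero_le _) (fun j _ hj => hstepf j (by omega)) h0 (le_of_lt hFgt)
        exact hbad1 j (le_trans hj2 hkn) hj3
      · have hfn : wt (Flip x (2*m)) ≤ m + q := by omega
        obtain ⟨j, _, hj2, hj3⟩ := walk_ivt' (fun j => wt (Flip x j)) k (2*m) (m+q)
          hkn (fun j _ hj => hstepf j hj) hfn (le_of_lt hFgt)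
        exact hbad1 j hj2 hj3
    refine Or.inl ⟨k + (m + q - wt (Flip y k)), by omega, ?_⟩
    rw [hgt (m + q - wt (Flip y k)) (by omega)]
    omega
  · -- prefix crossing for z
    push_neg at hcase
    have hc1 : wt (Flip x k) ≤ m - q + s := le_of_lt hcase
    have hc2 : m - q + s ≤ wt (Flip x 0) := by omega
    obtain ⟨j, _, hj1, hj2⟩ := walk_ivt' (fun j => wt (Flip x j)) 0 k (m - q + s)
      (Nat.zero_le _) (fun j _ hj => hstepf j (by omega)) hc1 hc2
    have hz' := key_z j hj1
    refine Or.inr ⟨j, le_trans hj1 hkn, ?_⟩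
    omega
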